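/- For every β > 0, the function R(d) = ((d²+2)e^{βd} − 2)² / (d²(e^{2βd} − 1)) on (0,∞) has a unique global minimum point d_opt > 0, and d_opt is the unique positive solution of the equation (d²−2)e^{3βd} + 2(βd+1)e^{2βd} − (βd³ + d² + 2βd − 2)e^{βd} − 2 = 0. -/

import Mathlib

open Real Filter

/-- The K-optimality objective for the two-point design `{0, d}`:
`R(d) = ((d²+2)e^{βd} − 2)² / (d²(e^{2βd} − 1))`. -/
noncomputable def Rtwo (β d : ℝ) : ℝ :=
  ((d ^ 2 + 2) * exp (β * d) - 2) ^ 2 / (d ^ 2 * (exp (2 * β * d) - 1))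

namespace KOpt

lemma hasD {f g : ℝ → ℝ} {d d' : ℝ} {x : ℝ} (h : HasDerivAt f d x)
    (hfg : ∀ y, g y = f y) (hd : d' = d) : HasDerivAt g d' x := by
  subst hd
  exact h.congr_of_eventuallyEq (Filter.Eventually.of_forall hfg)

lemma expc (c x : ℝ) : HasDerivAt (fun y => exp (c*y)) (c * exp (c*x)) x := by
  have h := ((hasDerivAt_id x).const_mul c).exp
  exact hasD h (fun y => rfl) (by simp only [id_eq]; ring)

lemma hpoly (a b e f x : ℝ) :
    HasDerivAt (fun y => a*y^3+b*y^2+e*y+f) (3*a*x^2+2*b*x+e) x := by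
  have h := ((((hasDerivAt_pow 3 x).const_mul a).add ((hasDerivAt_pow 2 x).const_mul b)).add
    ((hasDerivAt_id x).const_mul e)).add_const f
  exact hasD h (fun y => by push_cast [id_eq, Pi.add_apply, Pi.sub_apply]; ring) (by push_cast [id_eq]; ring)

lemma hterm (a b e f c x : ℝ) :
    HasDerivAt (fun y => (a*y^3+b*y^2+e*y+f)*exp (c*y))
      ((3*a*x^2+2*b*x+e+c*(a*x^3+b*x^2+e*x+f))*exp (c*x)) x := by
  have h := (hpoly a b e f x).mul (expc c x)
  exact hasD h (fun y => rfl) (by ring)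

lemma gt_of_deriv_pos (f f' : ℝ → ℝ) (hd : ∀ x, HasDerivAt f (f' x) x)
    (hp : ∀ x > 0, 0 < f' x) : ∀ x > 0, f 0 < f x := by
  intro x hx
  have hm : StrictMonoOn f (Set.Ici (0:ℝ)) := by
    apply strictMonoOn_of_deriv_pos (convex_Ici 0)
      (fun y _ => (hd y).continuousAt.continuousWithinAt)
    intro y hy
    rw [interior_Ici] at hy
    rw [(hd y).deriv]
    exact hp y hy
  exact hm Set.self_mem_Ici (Set.mem_Ici.2 hx.le) hx

lemma exp2 (y : ℝ) : exp (2*y) = exp y * exp y := by rw [two_mul, exp_add]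

lemma exp3 (y : ℝ) : exp (3*y) = exp y * exp y * exp y := by
  rw [show (3:ℝ)*y = y + y + y by ring, exp_add, exp_add]

lemma exp_quad {x : ℝ} (hx : 0 ≤ x) : 1 + x + x^2/4 ≤ exp x := by
  have h := add_one_le_exp (x/2)
  have h2 : exp x = exp (x/2) * exp (x/2) := by rw [← exp_add]; ring_nf
  nlinarith [exp_pos (x/2)]

lemma two_mul_le_exp {x : ℝ} (hx : 0 ≤ x) : 2*x ≤ exp x := by
  nlinarith [exp_quad hx, sq_nonneg (x - 2)]

lemma exp_le_one_add_two {x : ℝ} (hx0 : 0 ≤ x) (hx1 : x ≤ 1) : exp x ≤ 1 + 2*x := by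
  have h := abs_exp_sub_one_sub_id_le (x := x) (by rw [abs_of_nonneg hx0]; exact hx1)
  have h2 := (abs_sub_le_iff.1 h).1
  nlinarith

/-! ### The one-variable function `W0` and its positivity -/

noncomputable def Vpp (x : ℝ) : ℝ := 144*exp (2*x) - (8*x^2+64*x+116)*exp (1*x) + 8
noncomputable def Vp (x : ℝ) : ℝ := 72*exp (2*x) - (8*x^2+48*x+68)*exp (1*x) + (8*x+14)
noncomputable def V (x : ℝ) : ℝ := 36*exp (2*x) - (8*x^2+32*x+36)*exp (1*x) + (4*x^2+14*x)
noncomputable def W0p (x : ℝ) : ℝ :=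
  12*exp (3*x) - (4*x^2+12*x+12)*exp (2*x) + ((4*x^2+6*x-6)*exp (1*x) + 6)
noncomputable def W0 (x : ℝ) : ℝ :=
  4*exp (3*x) - (2*x^2+4*x+4)*exp (2*x) + ((4*x^2-2*x-4)*exp (1*x) + (6*x+4))

lemma hasDerivAt_Vpp (x : ℝ) :
    HasDerivAt Vpp ((288*exp (1*x) - (8*x^2+80*x+180))*exp (1*x)) x := by
  have h := ((hterm 0 0 0 144 2 x).sub (hterm 0 8 64 116 1 x)).add_const 8
  refine hasD h (fun y => by unfold Vpp; push_cast [id_eq, Pi.add_apply, Pi.sub_apply]; ring) ?_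
  rw [exp2, one_mul]
  ring

lemma Vpp_gt {x : ℝ} (hx : 0 < x) : (36:ℝ) < Vpp x := by
  have h0 : Vpp 0 = 36 := by unfold Vpp; norm_num
  rw [← h0]
  refine gt_of_deriv_pos Vpp _ hasDerivAt_Vpp (fun y hy => ?_) x hx
  have := exp_quad hy.le
  have he := exp_pos (1*y)
  apply mul_pos _ he
  rw [one_mul] at *
  nlinarith

lemma hasDerivAt_Vp (x : ℝ) : HasDerivAt Vp (Vpp x) x := by
  have h := ((hterm 0 0 0 72 2 x).sub (hterm 0 8 48 68 1 x)).add
    (((hasDerivAt_id x).const_mul 8).add_const 14)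
  refine hasD h (fun y => by unfold Vp; push_cast [id_eq, Pi.add_apply, Pi.sub_apply]; ring) ?_
  unfold Vpp
  push_cast [id_eq]
  ring

lemma Vp_gt {x : ℝ} (hx : 0 < x) : (18:ℝ) < Vp x := by
  have h0 : Vp 0 = 18 := by unfold Vp; norm_num
  rw [← h0]
  exact gt_of_deriv_pos Vp _ hasDerivAt_Vp
    (fun y hy => lt_trans (by norm_num) (Vpp_gt hy)) x hx

lemma hasDerivAt_V (x : ℝ) : HasDerivAt V (Vp x) x := by
  have h := ((hterm 0 0 0 36 2 x).sub (hterm 0 8 32 36 1 x)).add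
    (((hasDerivAt_pow 2 x).const_mul 4).add ((hasDerivAt_id x).const_mul 14))
  refine hasD h (fun y => by unfold V; push_cast [id_eq, Pi.add_apply, Pi.sub_apply]; ring) ?_
  unfold Vp
  push_cast [id_eq]
  ring

lemma V_pos {x : ℝ} (hx : 0 < x) : (0:ℝ) < V x := by
  have h0 : V 0 = 0 := by unfold V; norm_num
  rw [← h0]
  exact gt_of_deriv_pos V _ hasDerivAt_V
    (fun y hy => lt_trans (by norm_num) (Vp_gt hy)) x hx

lemma hasDerivAt_W0p (x : ℝ) : HasDerivAt W0p (exp (1*x) * V x) x := by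
  have h := ((hterm 0 0 0 12 3 x).sub (hterm 0 4 12 12 2 x)).add
    ((hterm 0 4 6 (-6) 1 x).add_const 6)
  refine hasD h (fun y => by unfold W0p; push_cast [id_eq, Pi.add_apply, Pi.sub_apply]; ring) ?_
  unfold V
  rw [exp3, exp2, one_mul]
  ring

lemma W0p_pos {x : ℝ} (hx : 0 < x) : (0:ℝ) < W0p x := by
  have h0 : W0p 0 = 0 := by unfold W0p; norm_num
  rw [← h0]
  exact gt_of_deriv_pos W0p _ hasDerivAt_W0p
    (fun y hy => mul_pos (exp_pos _) (V_pos hy)) x hx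

lemma hasDerivAt_W0 (x : ℝ) : HasDerivAt W0 (W0p x) x := by
  have h := ((hterm 0 0 0 4 3 x).sub (hterm 0 2 4 4 2 x)).add
    ((hterm 0 4 (-2) (-4) 1 x).add (((hasDerivAt_id x).const_mul 6).add_const 4))
  refine hasD h (fun y => by unfold W0; push_cast [id_eq, Pi.add_apply, Pi.sub_apply]; ring) ?_
  unfold W0p
  push_cast [id_eq]
  ring

lemma W0_pos {x : ℝ} (hx : 0 < x) : (0:ℝ) < W0 x := by
  have h0 : W0 0 = 0 := by unfold W0; norm_num
  rw [← h0]
  exact gt_of_deriv_pos W0 _ hasDerivAt_W0 (fun y hy => W0p_pos hy) x hx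

/-! ### The function `H` and smallness of `G` near zero -/

noncomputable def pf (x : ℝ) : ℝ := 6*exp (2*x) - (4*x+6)*exp (1*x) - 2*x
noncomputable def Pf (x : ℝ) : ℝ :=
  2*exp (3*x) - (2*x+2)*exp (2*x) + ((2*x-2)*exp (1*x) + (2 - 2*x^2))
noncomputable def Hf (x : ℝ) : ℝ := -2*exp (3*x) + (2*x+2)*exp (2*x) - (2*x-2)*exp (1*x) - 2

lemma pf_pos {x : ℝ} (hx : 0 < x) : 0 < pf x := by
  have h0 : pf 0 = 0 := by unfold pf; norm_num
  rw [← h0]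
  refine gt_of_deriv_pos pf (fun y => 12*exp (2*y) - (4*y+10)*exp (1*y) - 2) ?_
    (fun y hy => ?_) x hx
  · intro y
    have h := ((expc 2 y).const_mul 6 |>.sub (hterm 0 0 4 6 1 y)).sub
      ((hasDerivAt_id y).const_mul 2)
    refine hasD h (fun z => by unfold pf; push_cast [id_eq, Pi.add_apply, Pi.sub_apply]; ring) ?_
    push_cast [id_eq]; ring
  · show (0:ℝ) < 12*exp (2*y) - (4*y+10)*exp (1*y) - 2
    have h1 := add_one_le_exp y
    have h2 : exp (2*y) = exp y * exp y := exp2 y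
    have h3 : (0:ℝ) < exp y := exp_pos y
    rw [one_mul, h2]
    nlinarith

lemma Pf_pos {x : ℝ} (hx : 0 < x) : 0 < Pf x := by
  have h0 : Pf 0 = 0 := by unfold Pf; norm_num
  rw [← h0]
  refine gt_of_deriv_pos Pf
    (fun y => 6*exp (3*y) - (4*y+6)*exp (2*y) + (2*y*exp (1*y) - 4*y)) ?_
    (fun y hy => ?_) x hx
  · intro y
    have h := ((expc 3 y).const_mul 2 |>.sub (hterm 0 0 2 2 2 y)).add
      ((hterm 0 0 2 (-2) 1 y).add (((hasDerivAt_pow 2 y).const_mul (-2)).add_const 2))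
    refine hasD h (fun z => by unfold Pf; push_cast [id_eq, Pi.add_apply, Pi.sub_apply]; ring) ?_
    push_cast [id_eq]; ring
  · have hp := pf_pos hy
    have h1 := add_one_le_exp y
    have h3 : (0:ℝ) < exp y := exp_pos y
    have key : 6*exp (3*y) - (4*y+6)*exp (2*y) + (2*y*exp (1*y) - 4*y)
        = exp y * pf y + 4*y*(exp y - 1) := by
      unfold pf
      rw [exp3, exp2, one_mul]
      ring
    show (0:ℝ) < 6*exp (3*y) - (4*y+6)*exp (2*y) + (2*y*exp (1*y) - 4*y)
    rw [key]
    have : 0 < 4*y*(exp y - 1) := by nlinarith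
    nlinarith

lemma Hf_lt {x : ℝ} (hx : 0 < x) : Hf x < -2*x^2 := by
  have h := Pf_pos hx
  have key : Hf x = -(Pf x) - 2*x^2 := by unfold Hf Pf; ring
  rw [key]; linarith

/-! ### The function `G` -/

noncomputable def Gf (β d : ℝ) : ℝ :=
  (d^2 - 2)*exp (3*β*d) + 2*(β*d+1)*exp (2*β*d) - (β*d^3+d^2+2*β*d-2)*exp (β*d) - 2

noncomputable def Gp (β d : ℝ) : ℝ :=
  (3*β*d^2+2*d-6*β)*exp (3*β*d) + (4*β^2*d+6*β)*exp (2*β*d)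
    - (β^2*d^3+4*β*d^2+2*β^2*d+2*d)*exp (β*d)

lemma hasDerivAt_G (β d : ℝ) : HasDerivAt (Gf β) (Gp β d) d := by
  have h := (((hterm 0 1 0 (-2) (3*β) d).add (hterm 0 0 (2*β) 2 (2*β) d)).sub
    (hterm β 1 (2*β) (-2) β d)).sub_const 2
  refine hasD h (fun y => by unfold Gf; push_cast [id_eq, Pi.add_apply, Pi.sub_apply]; ring) ?_
  unfold Gp; push_cast [id_eq]; ring

lemma Gdecomp (β d : ℝ) :
    Gf β d = exp (β*d) * (exp (2*(β*d)) - β*d - 1) * d^2 + Hf (β*d) := by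
  unfold Gf Hf
  rw [show (3:ℝ)*β*d = 3*(β*d) by ring, show (2:ℝ)*β*d = 2*(β*d) by ring,
    exp3 (β*d), exp2 (β*d)]
  simp only [one_mul]
  ring

lemma G_neg_small {β : ℝ} (hβ : 0 < β) :
    Gf β (min (1/β) (β/11)) < 0 := by
  set d := min (1/β) (β/11) with hd
  have hd0 : 0 < d := lt_min (by positivity) (by positivity)
  have hdb : d ≤ β/11 := min_le_right _ _
  set x := β * d with hxd
  have hx0 : 0 < x := mul_pos hβ hd0
  have hx1 : x ≤ 1 := by
    have : d ≤ 1/β := min_le_left _ _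
    rw [hxd]
    calc β * d ≤ β * (1/β) := by nlinarith
    _ = 1 := by field_simp
  have he : exp x ≤ 1 + 2*x := exp_le_one_add_two hx0.le hx1
  have hep : (0:ℝ) < exp x := exp_pos x
  have he2 : exp (2*x) = exp x * exp x := exp2 x
  have h21 : exp x * (exp (2*x) - x - 1) ≤ 21*x := by
    have hl := add_one_le_exp x
    have hnn : 0 ≤ exp x * exp x - x - 1 := by nlinarith
    have h7 : exp x * exp x - x - 1 ≤ 3*x + 4*x^2 := by nlinarith
    have hmul := mul_le_mul he h7 hnn (by linarith : (0:ℝ) ≤ 1 + 2*x)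
    rw [he2]
    nlinarith [sq_nonneg x, mul_pos hx0 hx0]
  have hH := Hf_lt hx0
  rw [Gdecomp]
  rw [← hxd]
  have hsq : (0:ℝ) < d^2 := by positivity
  have lhs_le : exp x * (exp (2*x) - x - 1) * d^2 ≤ 21*x*d^2 := by nlinarith
  have h2120 : 21*x*d^2 - 2*x^2 ≤ 0 := by
    rw [hxd]
    have := mul_le_mul_of_nonneg_right hdb (by positivity : (0:ℝ) ≤ 21*β*d^2)
    nlinarith [sq_nonneg d, mul_pos hβ hd0]
  linarith

lemma G_pos_large {β : ℝ} (hβ : 0 < β) : 0 < Gf β (3 + 2/β) := by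
  obtain ⟨d, hd⟩ : ∃ d : ℝ, d = 3 + 2/β := ⟨_, rfl⟩
  rw [← hd]
  have hd3 : (3:ℝ) ≤ d := by
    have : 0 < 2/β := by positivity
    rw [hd]; linarith
  obtain ⟨x, hxd⟩ : ∃ x : ℝ, x = β * d := ⟨_, rfl⟩
  have hx2 : (2:ℝ) ≤ x := by
    rw [hxd, hd]
    have : β * (3 + 2/β) = 3*β + 2 := by field_simp
    rw [this]; linarith
  have hx0 : (0:ℝ) < x := by linarith
  have he1 := add_one_le_exp x
  have he2 := two_mul_le_exp hx0.le
  have hep : (0:ℝ) < exp x := exp_pos x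
  have hE2 : exp (2*x) = exp x * exp x := exp2 x
  have hE3 : exp (3*x) = exp x * exp x * exp x := exp3 x
  have hHb : -4*(exp x*exp x*exp x) ≤ Hf x := by
    unfold Hf
    rw [hE3, hE2]
    simp only [one_mul]
    nlinarith
  have hcb : exp x * exp x / 2 ≤ exp x * exp x - x - 1 := by nlinarith
  rw [Gdecomp, ← hxd, hE2]
  have hd2 : (9:ℝ) ≤ d^2 := by nlinarith
  have hcube : (0:ℝ) < exp x * exp x * exp x := by positivity
  have : exp x * (exp x * exp x / 2) * 9 ≤ exp x * (exp x*exp x - x - 1) * d^2 := by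
    apply mul_le_mul
    · nlinarith
    · exact hd2
    · norm_num
    · nlinarith
  have h45 : exp x*(exp x*exp x/2)*9 = (9/2)*(exp x*exp x*exp x) := by ring
  nlinarith

/-! ### The normalized function `psi` and its strict monotonicity -/

noncomputable def psi (β d : ℝ) : ℝ := Gf β d / (d^2 * exp (3*β*d))

lemma hasDerivAt_den (β d : ℝ) :
    HasDerivAt (fun y => y^2 * exp (3*β*y))
      (2*d*exp (3*β*d) + d^2*(3*β*exp (3*β*d))) d := by
  have h := (hasDerivAt_pow 2 d).mul (expc (3*β) d)
  refine hasD h (fun y => rfl) ?_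
  push_cast [id_eq]; ring

lemma den_pos {β d : ℝ} (hd : 0 < d) : 0 < d^2 * exp (3*β*d) := by positivity

lemma hasDerivAt_psi (β : ℝ) {d : ℝ} (hd : 0 < d) :
    HasDerivAt (psi β)
      ((Gp β d * (d^2 * exp (3*β*d))
        - Gf β d * (2*d*exp (3*β*d) + d^2*(3*β*exp (3*β*d)))) / (d^2 * exp (3*β*d))^2) d :=
  (hasDerivAt_G β d).div (hasDerivAt_den β d) (den_pos hd).ne'

lemma psi_num_eq (β d : ℝ) :
    Gp β d * (d^2 * exp (3*β*d))
      - Gf β d * (2*d*exp (3*β*d) + d^2*(3*β*exp (3*β*d)))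
    = exp (3*β*d) * d * (W0 (β*d) + (2*β^2*d^2 + β*d) * d^2 * exp (β*d)) := by
  unfold Gp Gf W0
  rw [show (3:ℝ)*β*d = 3*(β*d) by ring, show (2:ℝ)*β*d = 2*(β*d) by ring,
    exp3 (β*d), exp2 (β*d)]
  simp only [one_mul]
  ring

lemma psi_mono {β : ℝ} (hβ : 0 < β) : StrictMonoOn (psi β) (Set.Ioi 0) := by
  apply strictMonoOn_of_deriv_pos (convex_Ioi 0)
    (fun y hy => (hasDerivAt_psi β hy).continuousAt.continuousWithinAt)
  intro y hy
  rw [interior_Ioi] at hy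
  have hy' : 0 < y := hy
  rw [(hasDerivAt_psi β hy').deriv]
  apply div_pos
  · rw [psi_num_eq]
    have hb : 0 < β*y := mul_pos hβ hy'
    have h1 : 0 < W0 (β*y) := W0_pos hb
    have h2 : 0 < (2*β^2*y^2 + β*y) * y^2 * exp (β*y) :=
      mul_pos (mul_pos (add_pos_of_nonneg_of_pos (by positivity) hb) (by positivity))
        (exp_pos _)
    have h3 : 0 < exp (3*β*y) * y := mul_pos (exp_pos _) hy'
    exact mul_pos h3 (add_pos h1 h2)
  · positivity

lemma psi_eq_zero {β d : ℝ} (hd : 0 < d) (hG : Gf β d = 0) : psi β d = 0 := by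
  unfold psi; rw [hG]; simp

lemma G_sign_of_lt {β d d₀ : ℝ} (hβ : 0 < β) (hd : 0 < d) (hd₀ : 0 < d₀)
    (hlt : d < d₀) (hG0 : Gf β d₀ = 0) : Gf β d < 0 := by
  have h := psi_mono hβ (Set.mem_Ioi.2 hd) (Set.mem_Ioi.2 hd₀) hlt
  rw [psi_eq_zero hd₀ hG0] at h
  have hden := den_pos (β := β) hd
  have : Gf β d = psi β d * (d^2 * exp (3*β*d)) := by
    unfold psi; field_simp
  rw [this]
  exact mul_neg_of_neg_of_pos h hden

lemma G_sign_of_gt {β d d₀ : ℝ} (hβ : 0 < β) (hd₀ : 0 < d₀)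
    (hgt : d₀ < d) (hG0 : Gf β d₀ = 0) : 0 < Gf β d := by
  have hd : 0 < d := lt_trans hd₀ hgt
  have h := psi_mono hβ (Set.mem_Ioi.2 hd₀) (Set.mem_Ioi.2 hd) hgt
  rw [psi_eq_zero hd₀ hG0] at h
  have hden := den_pos (β := β) hd
  have : Gf β d = psi β d * (d^2 * exp (3*β*d)) := by
    unfold psi; field_simp
  rw [this]
  exact mul_pos h hden

/-! ### Derivative of `Rtwo` -/

lemma Npos {β d : ℝ} (hβ : 0 < β) (hd : 0 < d) : 0 < (d^2+2) * exp (β*d) - 2 := by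
  have h1 := add_one_le_exp (β*d)
  nlinarith [mul_pos hβ hd, sq_nonneg d, exp_pos (β*d)]

lemma Dpos {β d : ℝ} (hβ : 0 < β) (hd : 0 < d) : 0 < d^2 * (exp (2*β*d) - 1) := by
  have h1 : (0:ℝ) < 2*β*d := by positivity
  have h2 : (1:ℝ) < exp (2*β*d) := by
    calc (1:ℝ) < 1 + 2*β*d := by linarith
    _ ≤ exp (2*β*d) := by have := add_one_le_exp (2*β*d); linarith
  have : 0 < exp (2*β*d) - 1 := by linarith
  positivity

end KOpt

open KOpt in
lemma hasDerivAt_Rtwo (β : ℝ) {d : ℝ} (hβ : 0 < β) (hd : 0 < d) :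
    HasDerivAt (Rtwo β)
      ((2*d*((d^2+2)*exp (β*d) - 2)*Gf β d) / (d^2*(exp (2*β*d)-1))^2) d := by
  have hN : HasDerivAt (fun y => (y^2+2)*exp (β*y) - 2)
      ((2*d + β*(d^2+2))*exp (β*d)) d := by
    have h := (hterm 0 1 0 2 β d).sub_const 2
    refine hasD h (fun y => by push_cast [id_eq]; ring) ?_
    push_cast [id_eq]; ring
  have hN2 : HasDerivAt (fun y => ((y^2+2)*exp (β*y) - 2)^2)
      (2*((d^2+2)*exp (β*d) - 2)*((2*d + β*(d^2+2))*exp (β*d))) d := by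
    have h := hN.pow 2
    refine hasD h (fun y => rfl) ?_
    push_cast; ring
  have hD : HasDerivAt (fun y => y^2*(exp (2*β*y) - 1))
      (2*d*(exp (2*β*d)-1) + d^2*(2*β*exp (2*β*d))) d := by
    have h := (hasDerivAt_pow 2 d).mul ((expc (2*β) d).sub_const 1)
    refine hasD h (fun y => rfl) ?_
    push_cast [id_eq]; ring
  have hDne : d^2*(exp (2*β*d) - 1) ≠ 0 := (Dpos hβ hd).ne'
  have h := hN2.div hD hDne
  refine hasD h (fun y => by unfold Rtwo; rw [Pi.div_apply]) ?_
  have hnum : 2*((d^2+2)*exp (β*d) - 2)*((2*d + β*(d^2+2))*exp (β*d)) * (d^2*(exp (2*β*d)-1))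
      - ((d^2+2)*exp (β*d) - 2)^2 * (2*d*(exp (2*β*d)-1) + d^2*(2*β*exp (2*β*d)))
      = 2*d*((d^2+2)*exp (β*d) - 2)*Gf β d := by
    unfold Gf
    rw [show (3:ℝ)*β*d = 3*(β*d) by ring, show (2:ℝ)*β*d = 2*(β*d) by ring,
      exp3 (β*d), exp2 (β*d)]
    ring
  rw [← hnum]


open KOpt in
/-- There is a unique K-optimal two-point design `{0, d_opt}`: `Rtwo` has a
unique global minimum point `d_opt > 0`, which is the unique positive solution
of `(d²−2)e^{3βd} + 2(βd+1)e^{2βd} − (βd³+d²+2βd−2)e^{βd} − 2 = 0`. -/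
theorem twoPoint_K_optimal (β : ℝ) (hβ : 0 < β) :
    ∃ dopt : ℝ, 0 < dopt ∧
      (∀ d > (0 : ℝ), d ≠ dopt → Rtwo β dopt < Rtwo β d) ∧
      ((dopt ^ 2 - 2) * exp (3 * β * dopt) + 2 * (β * dopt + 1) * exp (2 * β * dopt)
        - (β * dopt ^ 3 + dopt ^ 2 + 2 * β * dopt - 2) * exp (β * dopt) - 2 = 0) ∧
      (∀ d > (0 : ℝ),
        (d ^ 2 - 2) * exp (3 * β * d) + 2 * (β * d + 1) * exp (2 * β * d)
          - (β * d ^ 3 + d ^ 2 + 2 * β * d - 2) * exp (β * d) - 2 = 0 → d = dopt) := by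
  have hd₁pos : 0 < min (1/β) (β/11) := lt_min (by positivity) (by positivity)
  have hlt : min (1/β) (β/11) < 3 + 2/β := by
    have h1 : min (1/β) (β/11) ≤ 1/β := min_le_left _ _
    have h2 : (2:ℝ)/β - 1/β = 1/β := by ring
    have h3 : (0:ℝ) < 1/β := by positivity
    linarith
  have hcontG : ContinuousOn (Gf β) (Set.Icc (min (1/β) (β/11)) (3 + 2/β)) :=
    fun y _ => (hasDerivAt_G β y).continuousAt.continuousWithinAt
  have h0mem : (0:ℝ) ∈ Set.Ioo (Gf β (min (1/β) (β/11))) (Gf β (3 + 2/β)) :=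
    ⟨G_neg_small hβ, G_pos_large hβ⟩
  obtain ⟨d₀, hd₀mem, hGd₀⟩ := intermediate_value_Ioo hlt.le hcontG h0mem
  have hd₀pos : 0 < d₀ := lt_trans hd₁pos hd₀mem.1
  refine ⟨d₀, hd₀pos, ?_, hGd₀, ?_⟩
  · intro d hd hne
    rcases lt_or_gt_of_ne hne with hcase | hcase
    · -- d < d₀ : Rtwo strictly decreasing on (0, d₀]
      have hanti : StrictAntiOn (Rtwo β) (Set.Ioc 0 d₀) := by
        apply strictAntiOn_of_deriv_neg (convex_Ioc 0 d₀)
          (fun y hy => (hasDerivAt_Rtwo β hβ hy.1).continuousAt.continuousWithinAt)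
        intro y hy
        rw [interior_Ioc] at hy
        rw [(hasDerivAt_Rtwo β hβ hy.1).deriv]
        apply div_neg_of_neg_of_pos
        · have hGneg : Gf β y < 0 := G_sign_of_lt hβ hy.1 hd₀pos hy.2 hGd₀
          have hN := Npos hβ hy.1
          have h2y : (0:ℝ) < 2*y := by linarith [hy.1]
          exact mul_neg_of_pos_of_neg (mul_pos h2y hN) hGneg
        · exact pow_pos (Dpos hβ hy.1) 2
      exact hanti ⟨hd, hcase.le⟩ ⟨hd₀pos, le_refl d₀⟩ hcase
    · -- d₀ < d : Rtwo strictly increasing on [d₀, ∞)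
      have hmono : StrictMonoOn (Rtwo β) (Set.Ici d₀) := by
        apply strictMonoOn_of_deriv_pos (convex_Ici d₀)
          (fun y hy => (hasDerivAt_Rtwo β hβ (lt_of_lt_of_le hd₀pos hy)).continuousAt.continuousWithinAt)
        intro y hy
        rw [interior_Ici] at hy
        have hypos : 0 < y := lt_trans hd₀pos hy
        rw [(hasDerivAt_Rtwo β hβ hypos).deriv]
        apply div_pos
        · have hGpos : 0 < Gf β y := G_sign_of_gt hβ hd₀pos hy hGd₀
          have hN := Npos hβ hypos
          have h2y : (0:ℝ) < 2*y := by linarith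
          exact mul_pos (mul_pos h2y hN) hGpos
        · exact pow_pos (Dpos hβ hypos) 2
      exact hmono (Set.self_mem_Ici) (Set.mem_Ici.2 hcase.le) hcase
  · intro d hd hGd
    have hGd' : Gf β d = 0 := hGd
    exact (psi_mono hβ).injOn (Set.mem_Ioi.2 hd) (Set.mem_Ioi.2 hd₀pos)
      (by rw [psi_eq_zero hd hGd', psi_eq_zero hd₀pos hGd₀])
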